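/- arXiv:1609.09336 — 2 statements merged into one kernel-verified Lean document; each statement's English description precedes it below -/
import Mathlib

section
/- Let b_1, b_2 be nonzero real numbers and m, n nonnegative integers. Then Σ_{a=0}^{n} (−1)^a C(m+n+1, n−a) b_1^a b_2^{−a−1} B_{n−a} E_{m+a+1}(0) − Σ_{a=0}^{m} (−1)^a C(m+n+1, m−a) b_2^a b_1^{−a−1} E_{m−a}(0) B_{n+a+1} = ((−1)^m/(b_1^{m+2} b_2^{n+1})) · (2/(m+n+2)) Σ_{a=1}^{m+n+2} (−1)^a C(m+n+2, a) b_1^a b_2^{m+n+2−a} (1 − 2^a) B_{m+n+2−a} B_a, where B_k = B_k(0) are the Bernoulli numbers and E_k(0) is the classical Euler polynomial evaluated at 0. -/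
/-- Higher-order Euler polynomial `E_m^{(α)}(z)` of real order `α`, defined as the `m`-th
Taylor coefficient (times `m!`) of the generating function `(2/(e^u+1))^α e^{uz}` at `u = 0`. -/
noncomputable def eulerH (α : ℝ) (m : ℕ) (z : ℝ) : ℝ :=
  iteratedDeriv m (fun u : ℝ => (2 / (Real.exp u + 1)) ^ α * Real.exp (u * z)) 0

/-- Higher-order Bernoulli polynomial `B_m^{(α)}(z)` of real order `α`, defined as the `m`-th
Taylor coefficient (times `m!`) of the generating function `(u/(e^u-1))^α e^{uz}` at `u = 0`
(the removable singularity at `u = 0` being filled in with the limit value `1`). -/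
noncomputable def bernoulliH (α : ℝ) (m : ℕ) (z : ℝ) : ℝ :=
  iteratedDeriv m
    (fun u : ℝ => (if u = 0 then (1 : ℝ) else u / (Real.exp u - 1)) ^ α * Real.exp (u * z)) 0

open Real
lemma letop {k : ℕ} : (k : WithTop ℕ∞) ≤ ((⊤:ℕ∞) : WithTop ℕ∞) := by exact_mod_cast le_top
lemma onetop : (1 : WithTop ℕ∞) ≤ ((⊤:ℕ∞) : WithTop ℕ∞) := by exact_mod_cast le_top
noncomputable def Bfun : ℝ → ℝ := fun u => if u = 0 then 1 else u / (Real.exp u - 1)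
noncomputable def Efun : ℝ → ℝ := fun u => 2 / (Real.exp u + 1)

lemma expm1_ne {u : ℝ} (hu : u ≠ 0) : Real.exp u - 1 ≠ 0 := by
  simp [sub_ne_zero, Real.exp_eq_one_iff, hu]

lemma dslope_exp_eq (u : ℝ) : dslope Real.exp 0 u = if u = 0 then 1 else (Real.exp u - 1) / u := by
  rcases eq_or_ne u 0 with rfl | hu
  · simp [dslope_same, Real.deriv_exp]
  · simp [dslope_of_ne _ hu, slope_def_field, hu]

lemma dslope_exp_ne_zero (u : ℝ) : dslope Real.exp 0 u ≠ 0 := by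
  rw [dslope_exp_eq]
  rcases eq_or_ne u 0 with rfl | hu
  · simp
  · simp [hu, div_ne_zero (expm1_ne hu) hu]

lemma contDiff_dslope_exp : ContDiff ℝ (⊤ : ℕ∞) (dslope Real.exp 0) := by
  rw [contDiff_iff_contDiffAt]
  intro x
  rcases eq_or_ne x 0 with rfl | hx
  · obtain ⟨p, hp⟩ := analyticAt_rexp (x := (0:ℝ))
    exact (HasFPowerSeriesAt.analyticAt (hp.has_fpower_series_dslope_fslope)).contDiffAt
  · have h1 : ContDiffAt ℝ (⊤ : ℕ∞) (fun u : ℝ => (Real.exp u - 1) / u) x :=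
      ((Real.contDiff_exp.sub contDiff_const).contDiffAt).div contDiffAt_id hx
    refine h1.congr_of_eventuallyEq ?_
    filter_upwards [isOpen_ne.mem_nhds hx] with u hu
    rw [dslope_exp_eq, if_neg hu]

lemma Bfun_eq : Bfun = fun u => (dslope Real.exp 0 u)⁻¹ := by
  funext u
  rw [dslope_exp_eq, Bfun]
  rcases eq_or_ne u 0 with rfl | hu
  · simp
  · simp [hu, inv_div]

lemma contDiff_Bfun : ContDiff ℝ (⊤ : ℕ∞) Bfun := by
  rw [Bfun_eq, contDiff_iff_contDiffAt]
  exact fun x => (contDiff_dslope_exp.contDiffAt).inv (dslope_exp_ne_zero x)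

lemma contDiff_Efun : ContDiff ℝ (⊤ : ℕ∞) Efun :=
  contDiff_const.div (Real.contDiff_exp.add contDiff_const) (fun x => by positivity)

lemma key_fun (u : ℝ) : u * Efun u = 2 * (Bfun u - Bfun (2 * u)) := by
  rcases eq_or_ne u 0 with rfl | hu
  · simp [Bfun, Efun]
  · have h2u : (2:ℝ) * u ≠ 0 := mul_ne_zero two_ne_zero hu
    have he1 : Real.exp u - 1 ≠ 0 := expm1_ne hu
    have he2 : Real.exp (2*u) - 1 ≠ 0 := expm1_ne h2u
    have hexp2 : Real.exp (2*u) = Real.exp u * Real.exp u := by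
      rw [two_mul, Real.exp_add]
    have hp : Real.exp u + 1 ≠ 0 := by positivity
    simp only [Bfun, Efun, if_neg hu, if_neg h2u]
    field_simp
    rw [mul_comm u 2]
    rw [hexp2] at he2 ⊢
    have he3 : rexp u * rexp u - 1 = (rexp u - 1) * (rexp u + 1) := by ring
    rw [he3]
    field_simp
    ring

lemma itd_add {f g : ℝ → ℝ} (k : ℕ) (x : ℝ) (hf : ContDiff ℝ (⊤ : ℕ∞) f) (hg : ContDiff ℝ (⊤ : ℕ∞) g) :
    iteratedDeriv k (fun u => f u + g u) x = iteratedDeriv k f x + iteratedDeriv k g x := by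
  simp only [← iteratedDerivWithin_univ]
  exact iteratedDerivWithin_add (Set.mem_univ x) uniqueDiffOn_univ
    ((hf.of_le letop).contDiffWithinAt) ((hg.of_le letop).contDiffWithinAt)

lemma itd_sub {f g : ℝ → ℝ} (k : ℕ) (x : ℝ) (hf : ContDiff ℝ (⊤ : ℕ∞) f) (hg : ContDiff ℝ (⊤ : ℕ∞) g) :
    iteratedDeriv k (fun u => f u - g u) x = iteratedDeriv k f x - iteratedDeriv k g x := by
  simp only [← iteratedDerivWithin_univ]
  exact iteratedDerivWithin_sub (Set.mem_univ x) uniqueDiffOn_univ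
    ((hf.of_le letop).contDiffWithinAt) ((hg.of_le letop).contDiffWithinAt)

lemma itd_cmul {f : ℝ → ℝ} (c : ℝ) (k : ℕ) (x : ℝ) (hf : ContDiff ℝ (⊤ : ℕ∞) f) :
    iteratedDeriv k (fun u => c * f u) x = c * iteratedDeriv k f x := by
  simp only [← iteratedDerivWithin_univ]
  exact iteratedDerivWithin_const_mul (Set.mem_univ x) uniqueDiffOn_univ c
    ((hf.of_le letop).contDiffWithinAt)

lemma itd_id_mul (k : ℕ) : ∀ (F : ℝ → ℝ), ContDiff ℝ (⊤ : ℕ∞) F →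
    iteratedDeriv (k+1) (fun u => u * F u) 0 = (k+1 : ℝ) * iteratedDeriv k F 0 := by
  induction k with
  | zero =>
    intro F hF
    rw [iteratedDeriv_one]
    rw [deriv_fun_mul (c := fun u => u) differentiableAt_id ((hF.differentiable (by simp)).differentiableAt)]
    simp
  | succ k ih =>
    intro F hF
    have hF' : ContDiff ℝ (⊤ : ℕ∞) (deriv F) := (contDiff_infty_iff_deriv.mp hF).2
    have hder : deriv (fun u : ℝ => u * F u) = fun u => F u + u * deriv F u := by
      funext u
      rw [deriv_fun_mul (c := fun u => u) differentiableAt_id ((hF.differentiable (by simp)).differentiableAt)]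
      simp [add_comm]
    rw [iteratedDeriv_succ', hder,
      itd_add (g := fun u => u * deriv F u) (k+1) 0 hF (by exact contDiff_id.mul hF'),
      ih (deriv F) hF', ← iteratedDeriv_succ']
    
    push_cast
    ring

lemma key_rel (k : ℕ) : ((k:ℝ)+1) * iteratedDeriv k Efun 0
    = 2 * (1 - 2^(k+1)) * iteratedDeriv (k+1) Bfun 0 := by
  have h1 := itd_id_mul k Efun contDiff_Efun
  have h2 : (fun u : ℝ => u * Efun u) = fun u => 2 * (Bfun u - Bfun (2*u)) :=
    funext key_fun
  have hB2 : ContDiff ℝ (⊤ : ℕ∞) (fun u : ℝ => Bfun (2*u)) :=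
    contDiff_Bfun.comp (contDiff_const.mul contDiff_id)
  have h3 : iteratedDeriv (k+1) (fun u : ℝ => Bfun (2*u)) 0
      = 2^(k+1) * iteratedDeriv (k+1) Bfun 0 := by
    have := iteratedDeriv_comp_const_mul (n := k+1) (contDiff_Bfun.of_le letop) (2:ℝ)
    have h4 := congrFun this 0
    simpa using h4
  rw [h2] at h1
  rw [itd_cmul _ _ _ (contDiff_Bfun.sub hB2),
    itd_sub _ _ contDiff_Bfun hB2, h3] at h1
  rw [← h1]
  ring



lemma eulerH_eq (k : ℕ) : eulerH 1 k 0 = iteratedDeriv k Efun 0 := by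
  unfold eulerH
  congr 1
  funext u
  simp [Real.rpow_one, Efun]

lemma bernoulliH_eq (k : ℕ) : bernoulliH 1 k 0 = iteratedDeriv k Bfun 0 := by
  unfold bernoulliH
  congr 1
  funext u
  simp only [mul_zero, Real.exp_zero, mul_one, Real.rpow_one]
  rfl

lemma eulerH_val (k : ℕ) : eulerH 1 k 0
    = 2 * (1 - 2^(k+1)) * bernoulliH 1 (k+1) 0 / ((k:ℝ)+1) := by
  have h := key_rel k
  rw [eulerH_eq, bernoulliH_eq]
  have hk : ((k:ℝ)+1) ≠ 0 := by positivity
  field_simp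
  linarith [h]

lemma Ioc_eq_Ico (a b : ℕ) : Finset.Ioc a b = Finset.Ico (a+1) (b+1) := by
  ext x
  simp [Nat.lt_succ_iff, Nat.succ_le_iff]

lemma sumA (b₁ b₂ : ℝ) (hb₁ : b₁ ≠ 0) (hb₂ : b₂ ≠ 0) (m n : ℕ) :
    (∑ a ∈ Finset.range (n + 1), (-1 : ℝ) ^ a * (Nat.choose (m + n + 1) (n - a) : ℝ) *
        b₁ ^ a * b₂ ^ (-(a : ℤ) - 1) * bernoulliH 1 (n - a) 0 * eulerH 1 (m + a + 1) 0)
    = ((-1 : ℝ) ^ m / (b₁ ^ (m + 2) * b₂ ^ (n + 1))) * (2 / (m + n + 2 : ℝ)) *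
        ∑ a ∈ Finset.Ioc (m+1) (m + n + 2), (-1 : ℝ) ^ a * (Nat.choose (m + n + 2) a : ℝ) *
          b₁ ^ a * b₂ ^ (m + n + 2 - a) * (1 - 2 ^ a) *
          bernoulliH 1 (m + n + 2 - a) 0 * bernoulliH 1 a 0 := by
  rw [Finset.mul_sum, Ioc_eq_Ico, Finset.sum_Ico_eq_sum_range]
  rw [show m + n + 2 + 1 - (m + 1 + 1) = n + 1 by omega]
  refine Finset.sum_congr rfl ?_
  intro a ha
  rw [Finset.mem_range, Nat.lt_succ_iff] at ha
  rw [show m + 1 + 1 + a = m + a + 2 by omega,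
      show m + n + 2 - (m + a + 2) = n - a by omega,
      eulerH_val (m + a + 1)]
  have hC : ((m+n+2).choose (m+a+2) : ℝ) * ((m:ℝ) + a + 2)
      = ((m:ℝ)+n+2) * ((m+n+1).choose (n-a) : ℝ) := by
    have h1 : (m+n+1).choose (n-a) = (m+n+1).choose (m+a+1) := by
      rw [show n - a = (m+n+1) - (m+a+1) by omega]
      exact Nat.choose_symm (by omega)
    have h2 := Nat.add_one_mul_choose_eq (m+n+1) (m+a+1)
    have h3 : (m+n+2) * ((m+n+1).choose (m+a+1)) = ((m+n+2).choose (m+a+2)) * (m+a+2) := by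
      simpa [Nat.succ_eq_add_one] using h2
    have h4 : ((m+n+2).choose (m+a+2)) * (m+a+2) = (m+n+2) * ((m+n+1).choose (n-a)) := by
      rw [h1, h3]
    exact_mod_cast congrArg (Nat.cast : ℕ → ℝ) h4
  have hA : ((m:ℝ) + a + 2) ≠ 0 := by positivity
  have hC1 : ((m+n+1).choose (n-a) : ℝ)
      = ((m+n+2).choose (m+a+2) : ℝ) * ((m:ℝ) + a + 2) / ((m:ℝ)+n+2) := by
    rw [hC]; field_simp
  have hz : b₂ ^ (-(a : ℤ) - 1) = b₂ ^ (n - a) / b₂ ^ (n + 1) := by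
    have he : (-(a:ℤ) - 1) = ((n - a : ℕ) : ℤ) - ((n+1 : ℕ) : ℤ) := by
      push_cast [Nat.cast_sub ha]; ring
    rw [he, zpow_sub₀ hb₂, zpow_natCast, zpow_natCast]
  have hsgn : (-1 : ℝ) ^ (m + a + 2) = (-1)^m * (-1)^a := by
    rw [pow_add, pow_add]; ring
  have hb1p : b₁ ^ (m + a + 2) = b₁ ^ (m + 2) * b₁ ^ a := by
    rw [← pow_add]; ring_nf
  have hcast : ((m + a + 1 : ℕ) : ℝ) + 1 = (m:ℝ) + a + 2 := by push_cast; ring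
  rw [hC1, hz, hsgn, hb1p, hcast]
  have hN2 : ((m:ℝ)+n+2) ≠ 0 := by positivity
  have hbp1 : b₁ ^ (m+2) ≠ 0 := pow_ne_zero _ hb₁
  have hbp2 : b₂ ^ (n+1) ≠ 0 := pow_ne_zero _ hb₂
  field_simp
  ring_nf
  simp [pow_mul,
    show ((-1:ℝ)^m)^2 = 1 from by rw [← pow_mul, mul_comm, pow_mul, neg_one_sq, one_pow]]

lemma sumB (b₁ b₂ : ℝ) (hb₁ : b₁ ≠ 0) (hb₂ : b₂ ≠ 0) (m n : ℕ) :
    (∑ a ∈ Finset.range (m + 1), (-1 : ℝ) ^ a * (Nat.choose (m + n + 1) (m - a) : ℝ) *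
        b₂ ^ a * b₁ ^ (-(a : ℤ) - 1) * eulerH 1 (m - a) 0 * bernoulliH 1 (n + a + 1) 0)
    = -(((-1 : ℝ) ^ m / (b₁ ^ (m + 2) * b₂ ^ (n + 1))) * (2 / (m + n + 2 : ℝ)) *
        ∑ a ∈ Finset.Ioc 0 (m + 1), (-1 : ℝ) ^ a * (Nat.choose (m + n + 2) a : ℝ) *
          b₁ ^ a * b₂ ^ (m + n + 2 - a) * (1 - 2 ^ a) *
          bernoulliH 1 (m + n + 2 - a) 0 * bernoulliH 1 a 0) := by
  rw [← Finset.sum_range_reflect, Ioc_eq_Ico, Finset.sum_Ico_eq_sum_range, Finset.mul_sum,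
    ← Finset.sum_neg_distrib]
  rw [show m + 1 + 1 - 1 = m + 1 by omega]
  refine Finset.sum_congr rfl ?_
  intro j hj
  rw [Finset.mem_range, Nat.lt_succ_iff] at hj
  simp only [Nat.add_sub_cancel]
  rw [show m - (m - j) = j by omega, show 1 + j = j + 1 by omega,
      show m + n + 2 - (j + 1) = n + (m - j) + 1 by omega,
      eulerH_val j]
  have hC : ((m+n+2).choose (j+1) : ℝ) * ((j:ℝ) + 1)
      = ((m:ℝ)+n+2) * ((m+n+1).choose j : ℝ) := by
    have h2 := Nat.add_one_mul_choose_eq (m+n+1) j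
    have h3 : ((m+n+2).choose (j+1)) * (j+1) = (m+n+2) * ((m+n+1).choose j) := by
      simpa [Nat.succ_eq_add_one] using h2.symm
    exact_mod_cast congrArg (Nat.cast : ℕ → ℝ) h3
  have hC1 : ((m+n+1).choose j : ℝ)
      = ((m+n+2).choose (j+1) : ℝ) * ((j:ℝ) + 1) / ((m:ℝ)+n+2) := by
    rw [hC]; field_simp
  have hz : b₁ ^ (-((m - j : ℕ) : ℤ) - 1) = b₁ ^ (j+1) / b₁ ^ (m + 2) := by
    have he : (-((m - j : ℕ):ℤ) - 1) = ((j+1 : ℕ) : ℤ) - ((m+2 : ℕ) : ℤ) := by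
      push_cast [Nat.cast_sub hj]; ring
    rw [he, zpow_sub₀ hb₁, zpow_natCast, zpow_natCast]
  have hb2p : b₂ ^ (n + (m - j) + 1) = b₂ ^ (n+1) * b₂ ^ (m - j) := by
    rw [← pow_add]; ring_nf
  have hsgn : (-1 : ℝ) ^ (m - j) = (-1)^m * (-1)^j := by
    have h : (-1:ℝ)^(m+j) = (-1)^(m-j) := by
      rw [show m + j = (m - j) + 2*j by omega, pow_add, pow_mul, neg_one_sq, one_pow, mul_one]
    rw [← h, pow_add]
  have hcast : ((j : ℕ) : ℝ) + 1 = (j:ℝ) + 1 := by norm_num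
  rw [hC1, hz, hb2p, hsgn]
  have hN2 : ((m:ℝ)+n+2) ≠ 0 := by positivity
  have hj1 : ((j:ℝ)+1) ≠ 0 := by positivity
  have hbp1 : b₁ ^ (m+2) ≠ 0 := pow_ne_zero _ hb₁
  have hbp2 : b₂ ^ (n+1) ≠ 0 := pow_ne_zero _ hb₂
  field_simp
  ring_nf

theorem stmt_17 (b₁ b₂ : ℝ) (hb₁ : b₁ ≠ 0) (hb₂ : b₂ ≠ 0) (m n : ℕ) :
    (∑ a ∈ Finset.range (n + 1), (-1 : ℝ) ^ a * (Nat.choose (m + n + 1) (n - a) : ℝ) *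
        b₁ ^ a * b₂ ^ (-(a : ℤ) - 1) * bernoulliH 1 (n - a) 0 * eulerH 1 (m + a + 1) 0)
      - (∑ a ∈ Finset.range (m + 1), (-1 : ℝ) ^ a * (Nat.choose (m + n + 1) (m - a) : ℝ) *
        b₂ ^ a * b₁ ^ (-(a : ℤ) - 1) * eulerH 1 (m - a) 0 * bernoulliH 1 (n + a + 1) 0)
    = ((-1 : ℝ) ^ m / (b₁ ^ (m + 2) * b₂ ^ (n + 1))) * (2 / (m + n + 2 : ℝ)) *
        ∑ a ∈ Finset.Icc 1 (m + n + 2), (-1 : ℝ) ^ a * (Nat.choose (m + n + 2) a : ℝ) *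
          b₁ ^ a * b₂ ^ (m + n + 2 - a) * (1 - 2 ^ a) *
          bernoulliH 1 (m + n + 2 - a) 0 * bernoulliH 1 a 0 := by
  have hIcc : Finset.Icc 1 (m + n + 2) = Finset.Ioc 0 (m + n + 2) := by
    ext x; simp; omega
  rw [hIcc, sumA b₁ b₂ hb₁ hb₂ m n, sumB b₁ b₂ hb₁ hb₂ m n, sub_neg_eq_add,
    ← mul_add]
  rw [add_comm (∑ a ∈ Finset.Ioc (m+1) (m+n+2), _),
    Finset.sum_Ioc_consecutive _ (Nat.zero_le (m+1)) (by omega : m+1 ≤ m+n+2)]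
end

section
/- Let n be a nonnegative integer and let s, t be positive real numbers with s/t < π. Then (1/n!) ∫_0^∞ e^{−su} Ē_n(tu) du = (1/s) Σ_{a=0}^{n} (E_a(0)/a!) (t/s)^{n−a} − (t^n/s^{n+1}) · 2/(e^{s/t} + 1), where the integral converges absolutely. -/
/-- The quasi-periodic Euler function `Ē_n(x) = (-1)^⌊x⌋ E_n(x - ⌊x⌋)`. -/
noncomputable def eulerBar (n : ℕ) (x : ℝ) : ℝ :=
  (-1 : ℝ) ^ (⌊x⌋) * eulerH 1 n (x - ⌊x⌋)


open Real Set MeasureTheory intervalIntegral Finset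

noncomputable def Eg : ℝ → ℝ := fun u => 2 / (Real.exp u + 1)

noncomputable def Ep (n : ℕ) (z : ℝ) : ℝ :=
  iteratedDeriv n (fun u : ℝ => Eg u * Real.exp (u * z)) 0

lemma contDiff_Eg : ContDiff ℝ (⊤ : ℕ∞) Eg :=
  contDiff_const.div (Real.contDiff_exp.add contDiff_const) (fun x => by positivity)

lemma contDiff_expz (z : ℝ) : ContDiff ℝ (⊤ : ℕ∞) (fun u : ℝ => Real.exp (u * z)) :=
  Real.contDiff_exp.comp (contDiff_id.mul contDiff_const)

lemma pascal_sum (F G : ℕ → ℝ) (n : ℕ) :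
    ∑ k ∈ Finset.range (n + 2), (((n+1).choose k : ℕ) : ℝ) * F k * G (n + 1 - k)
      = ∑ k ∈ Finset.range (n + 1), ((n.choose k : ℕ) : ℝ) * F (k+1) * G (n - k)
        + ∑ k ∈ Finset.range (n + 1), ((n.choose k : ℕ) : ℝ) * F k * G (n + 1 - k) := by
  rw [Finset.sum_range_succ' (fun k => (((n+1).choose k : ℕ) : ℝ) * F k * G (n + 1 - k)) (n+1)]
  have h1 : ∀ k ∈ Finset.range (n+1),
      ((((n+1).choose (k+1) : ℕ)) : ℝ) * F (k+1) * G (n + 1 - (k+1))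
        = ((n.choose k : ℕ) : ℝ) * F (k+1) * G (n - k)
          + ((n.choose (k+1) : ℕ) : ℝ) * F (k+1) * G (n + 1 - (k+1)) := by
    intro k hk
    rw [Nat.choose_succ_succ]
    have e : n + 1 - (k+1) = n - k := by omega
    rw [e]; push_cast; ring
  rw [Finset.sum_congr rfl h1, Finset.sum_add_distrib, add_assoc]
  congr 1
  have h2 : ∀ k ∈ Finset.range (n+1), ((n.choose (k+1) : ℕ) : ℝ) * F (k+1) * G (n+1-(k+1))
      = (fun k => ((n.choose k : ℕ) : ℝ) * F k * G (n+1-k)) (k+1) := fun k _ => rfl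
  rw [Finset.sum_congr rfl h2,
    show ((((n+1).choose 0 : ℕ)) : ℝ) * F 0 * G (n+1-0)
      = (fun k => ((n.choose k : ℕ) : ℝ) * F k * G (n+1-k)) 0 by simp,
    ← Finset.sum_range_succ' (fun k => ((n.choose k : ℕ) : ℝ) * F k * G (n+1-k)) (n+1),
    Finset.sum_range_succ]
  simp

/-- general Leibniz rule -/
lemma leibniz (f g : ℝ → ℝ) (hf : ContDiff ℝ (⊤ : ℕ∞) f) (hg : ContDiff ℝ (⊤ : ℕ∞) g)
    (n : ℕ) :
    iteratedDeriv n (fun u => f u * g u) = fun x =>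
      ∑ k ∈ Finset.range (n + 1),
        (n.choose k : ℝ) * iteratedDeriv k f x * iteratedDeriv (n - k) g x := by
  induction n with
  | zero => simp [iteratedDeriv_zero]
  | succ n ih =>
    funext x
    have hdf : ∀ k, Differentiable ℝ (iteratedDeriv k f) := fun k =>
      hf.differentiable_iteratedDeriv k (by exact_mod_cast WithTop.coe_lt_top _)
    have hdg : ∀ k, Differentiable ℝ (iteratedDeriv k g) := fun k =>
      hg.differentiable_iteratedDeriv k (by exact_mod_cast WithTop.coe_lt_top _)
    rw [iteratedDeriv_succ, ih]
    have hD : HasDerivAt (fun x => ∑ k ∈ Finset.range (n + 1),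
        (n.choose k : ℝ) * iteratedDeriv k f x * iteratedDeriv (n - k) g x)
        (∑ k ∈ Finset.range (n + 1), (n.choose k : ℝ) *
          (iteratedDeriv (k+1) f x * iteratedDeriv (n - k) g x
            + iteratedDeriv k f x * iteratedDeriv (n - k + 1) g x)) x := by
      apply HasDerivAt.fun_sum
      intro k _
      have h1 : HasDerivAt (iteratedDeriv k f) (iteratedDeriv (k+1) f x) x := by
        rw [iteratedDeriv_succ]; exact ((hdf k) x).hasDerivAt
      have h2 : HasDerivAt (iteratedDeriv (n-k) g) (iteratedDeriv (n-k+1) g x) x := by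
        rw [iteratedDeriv_succ]; exact ((hdg (n-k)) x).hasDerivAt
      simpa [mul_assoc] using (h1.mul h2).const_mul ((n.choose k : ℝ))
    rw [hD.deriv, pascal_sum (fun k => iteratedDeriv k f x) (fun k => iteratedDeriv k g x) n]
    rw [← Finset.sum_add_distrib]
    apply Finset.sum_congr rfl
    intro k hk
    rw [Finset.mem_range] at hk
    have e : n + 1 - k = n - k + 1 := by omega
    rw [e]; ring

lemma iteratedDeriv_expz (z : ℝ) (n : ℕ) (u : ℝ) :
    iteratedDeriv n (fun u : ℝ => Real.exp (u * z)) u = z ^ n * Real.exp (u * z) := by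
  induction n generalizing u with
  | zero => simp
  | succ n ih =>
    rw [iteratedDeriv_succ]
    have hcongr : deriv (iteratedDeriv n fun u : ℝ => Real.exp (u * z)) u
        = deriv (fun u => z ^ n * Real.exp (u * z)) u := by
      apply Filter.EventuallyEq.deriv_eq; filter_upwards with y; exact ih y
    have h : HasDerivAt (fun u : ℝ => Real.exp (u * z)) (Real.exp (u * z) * z) u := by
      simpa using ((hasDerivAt_id' u).mul_const z).exp
    rw [hcongr, deriv_const_mul _ h.differentiableAt, h.deriv, pow_succ]
    ring

lemma itd_zero_fun (n : ℕ) : iteratedDeriv n (fun _ : ℝ => (0 : ℝ)) = fun _ => 0 := by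
  induction n with
  | zero => simp [iteratedDeriv_zero]
  | succ n ih =>
    rw [iteratedDeriv_succ',
      show deriv (fun _ : ℝ => (0 : ℝ)) = fun _ => (0:ℝ) from funext fun x => deriv_const x 0, ih]

lemma itd_const (n : ℕ) (c : ℝ) (hn : n ≠ 0) :
    iteratedDeriv n (fun _ : ℝ => c) = fun _ => 0 := by
  obtain ⟨m, rfl⟩ := Nat.exists_eq_succ_of_ne_zero hn
  rw [iteratedDeriv_succ',
    show deriv (fun _ : ℝ => c) = fun _ => (0:ℝ) from funext fun x => deriv_const x c,
    itd_zero_fun]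

lemma iteratedDeriv_add' {f g : ℝ → ℝ} (hf : ContDiff ℝ (⊤ : ℕ∞) f)
    (hg : ContDiff ℝ (⊤ : ℕ∞) g) (n : ℕ) (x : ℝ) :
    iteratedDeriv n (fun u => f u + g u) x = iteratedDeriv n f x + iteratedDeriv n g x := by
  have h1 : ContDiffOn ℝ n f Set.univ := (hf.of_le (by exact_mod_cast le_top)).contDiffOn
  have h2 : ContDiffOn ℝ n g Set.univ := (hg.of_le (by exact_mod_cast le_top)).contDiffOn
  rw [← iteratedDerivWithin_univ, ← iteratedDerivWithin_univ, ← iteratedDerivWithin_univ]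
  exact iteratedDerivWithin_add (Set.mem_univ x) uniqueDiffOn_univ (h1 x (Set.mem_univ x)) (h2 x (Set.mem_univ x))

lemma Ep_zero_apply (z : ℝ) : Ep 0 z = 1 := by
  simp [Ep, iteratedDeriv_zero, Eg]
  norm_num

lemma Ep_at_zero (n : ℕ) : Ep n 0 = iteratedDeriv n Eg 0 := by
  unfold Ep
  congr 1
  funext u
  simp

lemma Ep_eq_sum (n : ℕ) (z : ℝ) :
    Ep n z = ∑ k ∈ Finset.range (n + 1), (n.choose k : ℝ) * Ep k 0 * z ^ (n - k) := by
  show iteratedDeriv n (fun u : ℝ => Eg u * Real.exp (u * z)) 0 = _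
  rw [leibniz Eg _ contDiff_Eg (contDiff_expz z) n]
  apply Finset.sum_congr rfl
  intro k hk
  rw [iteratedDeriv_expz z (n - k) 0, ← Ep_at_zero]
  simp

lemma Ep_continuous (n : ℕ) : Continuous (Ep n) := by
  have : Ep n = fun z => ∑ k ∈ Finset.range (n + 1), (n.choose k : ℝ) * Ep k 0 * z ^ (n - k) :=
    funext fun z => Ep_eq_sum n z
  rw [this]
  exact continuous_finset_sum _ fun k _ => (continuous_const.mul continuous_const).mul (continuous_pow _)

lemma choose_id (n k : ℕ) (h : k ≤ n) :
    (n + 1 - k) * (n + 1).choose k = (n + 1) * n.choose k := by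
  have h1 := Nat.add_one_mul_choose_eq n (n - k)
  rw [Nat.choose_symm h] at h1
  have e1 : (n + 1).choose (n - k + 1) = (n + 1).choose k := by
    have : n - k + 1 = (n + 1) - k := by omega
    rw [this, Nat.choose_symm (by omega)]
  rw [e1] at h1
  have h2 : (n + 1) * n.choose k = (n + 1).choose k * (n - k + 1) := by
    simpa [Nat.succ_eq_add_one] using h1
  have e3 : n + 1 - k = n - k + 1 := by omega
  rw [e3, h2, Nat.mul_comm]

lemma Ep_hasDerivAt (n : ℕ) (z : ℝ) :
    HasDerivAt (Ep (n + 1)) (((n : ℝ) + 1) * Ep n z) z := by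
  have hfun : Ep (n + 1) = fun z => ∑ k ∈ Finset.range (n + 2),
      ((n+1).choose k : ℝ) * Ep k 0 * z ^ (n + 1 - k) := funext fun z => Ep_eq_sum (n+1) z
  rw [hfun]
  have hD : HasDerivAt (fun z : ℝ => ∑ k ∈ Finset.range (n + 2),
      ((n+1).choose k : ℝ) * Ep k 0 * z ^ (n + 1 - k))
      (∑ k ∈ Finset.range (n + 2),
        ((n+1).choose k : ℝ) * Ep k 0 * ((n + 1 - k : ℕ) * z ^ (n + 1 - k - 1))) z := by
    apply HasDerivAt.fun_sum
    intro k _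
    exact (hasDerivAt_pow (n + 1 - k) z).const_mul _
  convert hD using 1
  rw [Finset.sum_range_succ]
  have hlast : ((n+1).choose (n+1) : ℝ) * Ep (n+1) 0 * ((n + 1 - (n+1) : ℕ) * z ^ (n + 1 - (n+1) - 1)) = 0 := by
    simp
  rw [hlast, add_zero, Ep_eq_sum n z, Finset.mul_sum]
  apply Finset.sum_congr rfl
  intro k hk
  rw [Finset.mem_range] at hk
  have hk' : k ≤ n := Nat.lt_succ_iff.mp hk
  have e1 : n + 1 - k - 1 = n - k := by omega
  have e2 : (((n + 1 - k : ℕ) : ℝ)) * ((n+1).choose k : ℝ) = ((n : ℝ) + 1) * (n.choose k : ℝ) := by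
    exact_mod_cast congrArg (fun m : ℕ => (m : ℝ)) (choose_id n k hk')
  rw [e1]
  calc ((n:ℝ)+1) * ((n.choose k:ℝ) * Ep k 0 * z^(n-k))
      = (((n:ℝ)+1) * (n.choose k:ℝ)) * (Ep k 0 * z^(n-k)) := by ring
    _ = ((((n+1-k:ℕ)):ℝ) * ((n+1).choose k : ℝ)) * (Ep k 0 * z^(n-k)) := by rw [e2]
    _ = ((n+1).choose k : ℝ) * Ep k 0 * (((n+1-k:ℕ):ℝ) * z^(n-k)) := by ring

lemma Ep_one_add_Ep_zero (n : ℕ) (hn : n ≠ 0) : Ep n 1 + Ep n 0 = 0 := by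
  have h1 : ContDiff ℝ (⊤ : ℕ∞) (fun u : ℝ => Eg u * Real.exp (u * 1)) :=
    contDiff_Eg.mul (contDiff_expz 1)
  have h0 : ContDiff ℝ (⊤ : ℕ∞) (fun u : ℝ => Eg u * Real.exp (u * 0)) :=
    contDiff_Eg.mul (contDiff_expz 0)
  have key : (fun u : ℝ => (fun u : ℝ => Eg u * Real.exp (u * 1)) u
      + (fun u : ℝ => Eg u * Real.exp (u * 0)) u) = fun _ : ℝ => (2 : ℝ) := by
    funext u
    have hpos : Real.exp u + 1 ≠ 0 := by positivity
    simp only [mul_one, mul_zero, Real.exp_zero, Eg]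
    field_simp
  have := iteratedDeriv_add' h1 h0 n 0
  rw [show Ep n 1 + Ep n 0 = iteratedDeriv n (fun u : ℝ => Eg u * Real.exp (u * 1)) 0
    + iteratedDeriv n (fun u : ℝ => Eg u * Real.exp (u * 0)) 0 from rfl, ← this, key,
    itd_const n 2 hn]






lemma eulerH_one (n : ℕ) (z : ℝ) : eulerH 1 n z = Ep n z := by
  unfold eulerH Ep Eg
  congr 1
  funext u
  rw [Real.rpow_one]

lemma eulerBar_eq (n : ℕ) (x : ℝ) :
    eulerBar n x = (-1 : ℝ) ^ (⌊x⌋) * Ep n (x - ⌊x⌋) := by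
  rw [eulerBar, eulerH_one]

lemma eulerBar_bound (n : ℕ) : ∃ C : ℝ, ∀ x : ℝ, |eulerBar n x| ≤ C := by
  obtain ⟨C, hC⟩ := (isCompact_Icc (a := (0:ℝ)) (b := 1)).exists_bound_of_continuousOn
    (Ep_continuous n).continuousOn
  refine ⟨C, fun x => ?_⟩
  rw [eulerBar_eq, abs_mul]
  have h1 : |(-1 : ℝ) ^ (⌊x⌋)| = 1 := by
    rcases Int.even_or_odd ⌊x⌋ with he | ho
    · rw [he.neg_one_zpow]; simp
    · rw [ho.neg_one_zpow]; simp
  rw [h1, one_mul]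
  have h2 : x - ⌊x⌋ ∈ Icc (0:ℝ) 1 :=
    ⟨by linarith [Int.floor_le x], by linarith [Int.lt_floor_add_one x]⟩
  simpa using hC _ h2

lemma eulerBar_measurable (n : ℕ) : Measurable (eulerBar n) := by
  have hfl : Measurable fun x : ℝ => (⌊x⌋ : ℤ) := Int.measurable_floor
  have h1 : Measurable fun x : ℝ => ((-1:ℝ) ^ (⌊x⌋ : ℤ)) :=
    (measurable_of_countable (fun k : ℤ => (-1:ℝ) ^ k)).comp hfl
  have h2 : Measurable fun x : ℝ => Ep n (x - ⌊x⌋) :=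
    (Ep_continuous n).measurable.comp
      (measurable_id.sub ((measurable_of_countable (fun k : ℤ => ((k:ℝ)))).comp hfl))
  have : eulerBar n = fun x => ((-1:ℝ) ^ (⌊x⌋ : ℤ)) * Ep n (x - ⌊x⌋) :=
    funext fun x => eulerBar_eq n x
  rw [this]
  exact h1.mul h2

lemma integrable_aux (n : ℕ) (s t : ℝ) (hs : 0 < s) (ht : 0 < t) :
    IntegrableOn (fun u : ℝ => Real.exp (-s * u) * eulerBar n (t * u)) (Set.Ioi 0) := by
  obtain ⟨C, hC⟩ := eulerBar_bound n
  have hmeas : AEStronglyMeasurable (fun u : ℝ => Real.exp (-s * u) * eulerBar n (t * u))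
      (volume.restrict (Set.Ioi 0)) :=
    ((Real.measurable_exp.comp (measurable_const.mul measurable_id)).mul
      ((eulerBar_measurable n).comp (measurable_const.mul measurable_id))).aestronglyMeasurable
  apply Integrable.mono' (((exp_neg_integrableOn_Ioi 0 hs)).const_mul C) hmeas
  filter_upwards with u
  rw [norm_mul, Real.norm_eq_abs, Real.norm_eq_abs, abs_of_pos (Real.exp_pos _), mul_comm C _]
  exact mul_le_mul_of_nonneg_left (hC _) (Real.exp_pos _).le

lemma union_Ico (t : ℝ) (ht : 0 < t) :
    (⋃ k : ℕ, Ico ((k:ℝ)/t) (((k:ℝ)+1)/t)) = Ici (0:ℝ) := by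
  ext x
  simp only [Set.mem_iUnion, Set.mem_Ico, Set.mem_Ici]
  constructor
  · rintro ⟨k, h1, _⟩
    have : (0:ℝ) ≤ (k:ℝ)/t := by positivity
    linarith
  · intro hx
    have htx : 0 ≤ t * x := mul_nonneg ht.le hx
    have hcast : ((⌊t*x⌋).toNat : ℝ) = ((⌊t*x⌋ : ℤ) : ℝ) := by
      exact_mod_cast congrArg (fun z : ℤ => (z:ℝ)) (Int.toNat_of_nonneg (Int.floor_nonneg.mpr htx))
    refine ⟨(⌊t*x⌋).toNat, ?_, ?_⟩
    · rw [div_le_iff₀ ht, hcast]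
      calc ((⌊t*x⌋:ℤ):ℝ) ≤ t*x := Int.floor_le _
        _ = x * t := mul_comm _ _
    · rw [lt_div_iff₀ ht, hcast]
      calc x * t = t * x := mul_comm _ _
        _ < ⌊t*x⌋ + 1 := Int.lt_floor_add_one _

lemma disj_Ico (t : ℝ) (ht : 0 < t) :
    Pairwise (Function.onFun Disjoint fun k : ℕ => Ico ((k:ℝ)/t) (((k:ℝ)+1)/t)) := by
  intro i j hij
  apply Set.Ico_disjoint_Ico.mpr
  rcases lt_or_gt_of_ne hij with h | h
  · refine (min_le_left _ _).trans (le_trans ?_ (le_max_right _ _))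
    gcongr
    exact_mod_cast h
  · refine (min_le_right _ _).trans (le_trans ?_ (le_max_left _ _))
    gcongr
    exact_mod_cast h

lemma floor_on_Ico (t : ℝ) (ht : 0 < t) (k : ℕ) {u : ℝ}
    (hu : u ∈ Ico ((k:ℝ)/t) (((k:ℝ)+1)/t)) : ⌊t*u⌋ = (k:ℤ) := by
  obtain ⟨h1, h2⟩ := hu
  rw [div_le_iff₀ ht] at h1
  rw [lt_div_iff₀ ht] at h2
  rw [Int.floor_eq_iff]
  constructor
  · push_cast; linarith
  · push_cast; linarith

lemma piece (n : ℕ) (s t : ℝ) (hs : 0 < s) (ht : 0 < t) (k : ℕ) :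
    ∫ u in Ico ((k:ℝ)/t) (((k:ℝ)+1)/t), Real.exp (-s*u) * eulerBar n (t*u)
      = (-(Real.exp (-(s/t))))^k *
        ((1/t) * ∫ x in (0:ℝ)..1, Real.exp (-(s/t)*x) * Ep n x) := by
  set c := s/t with hc
  have hEq : EqOn (fun u => Real.exp (-s*u) * eulerBar n (t*u))
      (fun u => ((-1:ℝ)^k * Real.exp (-c*(k:ℝ))) *
        (Real.exp (-c*(t*u + -(k:ℝ))) * Ep n (t*u + -(k:ℝ)))) (Ico ((k:ℝ)/t) (((k:ℝ)+1)/t)) := by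
    intro u hu
    have hfl := floor_on_Ico t ht k hu
    simp only
    rw [eulerBar_eq, hfl]
    have hz : ((-1:ℝ)^((k:ℕ):ℤ)) = (-1:ℝ)^k := zpow_natCast _ _
    have hexp : Real.exp (-s*u) = Real.exp (-c*(k:ℝ)) * Real.exp (-c*(t*u + -(k:ℝ))) := by
      rw [← Real.exp_add]
      congr 1
      rw [hc]
      field_simp
      ring
    rw [hz, hexp]
    push_cast
    ring
  rw [setIntegral_congr_fun measurableSet_Ico hEq]
  have hle : ((k:ℝ))/t ≤ ((k:ℝ)+1)/t := by gcongr; linarith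
  rw [integral_Ico_eq_integral_Ioo, ← integral_Ioc_eq_integral_Ioo,
    ← intervalIntegral.integral_of_le hle, intervalIntegral.integral_const_mul]
  have hcomp := intervalIntegral.integral_comp_mul_add (a := ((k:ℝ))/t) (b := ((k:ℝ)+1)/t)
    (f := fun y => Real.exp (-c*y) * Ep n y) ht.ne' (-(k:ℝ))
  rw [show t * ((k:ℝ)/t) + -(k:ℝ) = 0 by field_simp; ring,
      show t * (((k:ℝ)+1)/t) + -(k:ℝ) = 1 by field_simp; ring] at hcomp
  rw [hcomp, smul_eq_mul,
    show Real.exp (-c*(k:ℝ)) = (Real.exp (-c))^k by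
      rw [show (-c*(k:ℝ)) = (k:ℝ)*(-c) by ring]; exact Real.exp_nat_mul _ k,
    show ((-(Real.exp (-c))):ℝ)^k = (-1:ℝ)^k * (Real.exp (-c))^k from neg_pow _ _]
  ring


lemma J0 (c : ℝ) (hc : 0 < c) :
    ∫ x in (0:ℝ)..1, Real.exp (-c*x) * Ep 0 x = (1 - Real.exp (-c))/c := by
  have h1 : ∀ x ∈ uIcc (0:ℝ) 1, HasDerivAt (fun y => -(1/c) * Real.exp (-c*y))
      (Real.exp (-c*x) * Ep 0 x) x := by
    intro x _
    have h := (((hasDerivAt_id x).const_mul (-c)).exp).const_mul (-(1/c))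
    simp only [mul_one] at h
    refine h.congr_deriv ?_
    rw [Ep_zero_apply x]
    simp only [id]
    field_simp
  rw [intervalIntegral.integral_eq_sub_of_hasDerivAt h1
    (((Real.continuous_exp.comp (continuous_const.mul continuous_id)).mul
      (Ep_continuous 0)).intervalIntegrable _ _)]
  rw [mul_one, mul_zero, Real.exp_zero]
  field_simp
  ring

lemma Jrec (c : ℝ) (hc : 0 < c) (n : ℕ) :
    Real.exp (-c) * Ep (n+1) 1 - Ep (n+1) 0
      = -c * (∫ x in (0:ℝ)..1, Real.exp (-c*x) * Ep (n+1) x)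
        + ((n:ℝ)+1) * (∫ x in (0:ℝ)..1, Real.exp (-c*x) * Ep n x) := by
  have hcont : ∀ m : ℕ, Continuous (fun x : ℝ => Real.exp (-c*x) * Ep m x) := fun m =>
    (Real.continuous_exp.comp (continuous_const.mul continuous_id)).mul (Ep_continuous m)
  have hD : ∀ x ∈ uIcc (0:ℝ) 1, HasDerivAt (fun y => Real.exp (-c*y) * Ep (n+1) y)
      ((-c) * (Real.exp (-c*x) * Ep (n+1) x) + ((n:ℝ)+1) * (Real.exp (-c*x) * Ep n x)) x := by
    intro x _
    have h1 : HasDerivAt (fun y : ℝ => Real.exp (-c*y)) (Real.exp (-c*x) * (-c)) x := by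
      simpa using ((hasDerivAt_id x).const_mul (-c)).exp
    have h2 := h1.mul (Ep_hasDerivAt n x)
    refine h2.congr_deriv ?_
    ring
  have hint : IntervalIntegrable (fun x => (-c) * (Real.exp (-c*x) * Ep (n+1) x)
      + ((n:ℝ)+1) * (Real.exp (-c*x) * Ep n x)) volume 0 1 :=
    ((continuous_const.mul (hcont (n+1))).add (continuous_const.mul (hcont n))).intervalIntegrable _ _
  have key := intervalIntegral.integral_eq_sub_of_hasDerivAt hD hint
  rw [intervalIntegral.integral_add (((hcont (n+1)).intervalIntegrable 0 1).const_mul (-c))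
    (((hcont n).intervalIntegrable 0 1).const_mul ((n:ℝ)+1)),
    intervalIntegral.integral_const_mul, intervalIntegral.integral_const_mul] at key
  have h01 : Real.exp (-c*1) = Real.exp (-c) := by norm_num
  have h00 : Real.exp (-c*0) = 1 := by norm_num
  rw [h01, h00, one_mul] at key
  exact key.symm

lemma main_integral (n : ℕ) (s t : ℝ) (hs : 0 < s) (ht : 0 < t) :
    ∫ u in Set.Ioi (0:ℝ), Real.exp (-s*u) * eulerBar n (t*u)
      = (1/(t*(1+Real.exp (-(s/t))))) * ∫ x in (0:ℝ)..1, Real.exp (-(s/t)*x) * Ep n x := by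
  have hint : IntegrableOn (fun u : ℝ => Real.exp (-s*u) * eulerBar n (t*u)) (Set.Ici 0) := by
    rw [integrableOn_Ici_iff_integrableOn_Ioi]
    exact integrable_aux n s t hs ht
  rw [← MeasureTheory.integral_Ici_eq_integral_Ioi, ← union_Ico t ht,
    MeasureTheory.integral_iUnion (fun k => measurableSet_Ico) (disj_Ico t ht)
      (by rw [union_Ico t ht]; exact hint),
    tsum_congr (fun k => piece n s t hs ht k), tsum_mul_right,
    tsum_geometric_of_norm_lt_one (by
      rw [norm_neg, Real.norm_eq_abs, abs_of_pos (Real.exp_pos _)]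
      exact Real.exp_lt_one_iff.mpr (neg_lt_zero.mpr (div_pos hs ht)))]
  rw [sub_neg_eq_add]
  have h2 : (0:ℝ) < 1 + Real.exp (-(s/t)) := by positivity
  rw [one_div, one_div, mul_inv]
  ring

lemma formula (s t : ℝ) (hs : 0 < s) (ht : 0 < t) (n : ℕ) :
    (1/(t*(1+Real.exp (-(s/t))))) * ∫ x in (0:ℝ)..1, Real.exp (-(s/t)*x) * Ep n x
      = (n.factorial : ℝ) * ((1/s) * (∑ a ∈ Finset.range (n+1),
          (Ep a 0 / (a.factorial:ℝ)) * (t/s)^(n-a))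
        - (t^n/s^(n+1)) * (2/(Real.exp (s/t) + 1))) := by
  have hc0 : 0 < s/t := div_pos hs ht
  have hr1 : Real.exp (-(s/t)) * Real.exp (s/t) = 1 := by rw [← Real.exp_add]; simp
  have hs' : s ≠ 0 := hs.ne'
  have ht' : t ≠ 0 := ht.ne'
  have hct : (s/t) * t = s := by field_simp
  have hrpos : (0:ℝ) < 1 + Real.exp (-(s/t)) := by positivity
  have hepos : (0:ℝ) < Real.exp (s/t) + 1 := by positivity
  induction n with
  | zero =>
    rw [J0 (s/t) hc0]
    have h0 : Ep 0 0 = 1 := Ep_zero_apply 0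
    set E := Real.exp (s/t) with hE
    set r := Real.exp (-(s/t)) with hr
    simp only [zero_add, Finset.range_one, Finset.sum_singleton, Nat.factorial_zero, Nat.cast_one,
      pow_zero, pow_one, h0, one_mul, mul_one, div_one, Nat.sub_zero]
    field_simp
    linear_combination (-2) * hr1
  | succ n ih =>
    have hrec := Jrec (s/t) hc0 n
    have hE1 : Ep (n+1) 1 = -Ep (n+1) 0 := by
      have := Ep_one_add_Ep_zero (n+1) (Nat.succ_ne_zero n); linarith
    rw [hE1] at hrec
    have hJ' : (∫ x in (0:ℝ)..1, Real.exp (-(s/t)*x) * Ep (n+1) x)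
        = ((1 + Real.exp (-(s/t))) * Ep (n+1) 0
          + ((n:ℝ)+1) * ∫ x in (0:ℝ)..1, Real.exp (-(s/t)*x) * Ep n x) / (s/t) := by
      rw [eq_div_iff hc0.ne']
      linarith [hrec]
    rw [hJ']
    have lhs_eq : (1/(t*(1+Real.exp (-(s/t))))) * (((1 + Real.exp (-(s/t))) * Ep (n+1) 0
          + ((n:ℝ)+1) * ∫ x in (0:ℝ)..1, Real.exp (-(s/t)*x) * Ep n x) / (s/t))
        = Ep (n+1) 0 / s + (((n:ℝ)+1)*t/s) *
          ((1/(t*(1+Real.exp (-(s/t))))) * ∫ x in (0:ℝ)..1, Real.exp (-(s/t)*x) * Ep n x) := by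
      field_simp
    rw [lhs_eq, ih]
    -- pure algebra
    have hsum : ∑ a ∈ Finset.range (n+2), (Ep a 0/(a.factorial:ℝ))*(t/s)^(n+1-a)
        = (t/s) * (∑ a ∈ Finset.range (n+1), (Ep a 0/(a.factorial:ℝ))*(t/s)^(n-a))
          + Ep (n+1) 0/((n+1).factorial:ℝ) := by
      rw [Finset.sum_range_succ, Finset.mul_sum]
      congr 1
      · apply Finset.sum_congr rfl
        intro a ha
        rw [Finset.mem_range] at ha
        rw [show n+1-a = (n-a)+1 by omega, pow_succ]
        ring
      · simp
    rw [hsum]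
    have hfac : ((n.factorial:ℝ)) ≠ 0 := by exact_mod_cast n.factorial_ne_zero
    have hfac1 : (((n+1).factorial:ℝ)) ≠ 0 := by exact_mod_cast (n+1).factorial_ne_zero
    push_cast [Nat.factorial_succ]
    field_simp
    ring

theorem stmt_19 (n : ℕ) (s t : ℝ) (hs : 0 < s) (ht : 0 < t) (hst : s / t < Real.pi) :
    MeasureTheory.IntegrableOn
        (fun u : ℝ => Real.exp (-s * u) * eulerBar n (t * u)) (Set.Ioi 0) ∧
      (1 / (n.factorial : ℝ)) *
          ∫ u in Set.Ioi (0 : ℝ), Real.exp (-s * u) * eulerBar n (t * u)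
        = (1 / s) * (∑ a ∈ Finset.range (n + 1),
              (eulerH 1 a 0 / (a.factorial : ℝ)) * (t / s) ^ (n - a))
          - (t ^ n / s ^ (n + 1)) * (2 / (Real.exp (s / t) + 1)) := by
  have hfac : ((n.factorial : ℝ)) ≠ 0 := by exact_mod_cast n.factorial_ne_zero
  refine ⟨integrable_aux n s t hs ht, ?_⟩
  rw [main_integral n s t hs ht, formula s t hs ht n, one_div, inv_mul_cancel_left₀ hfac]
  congr 1
  congr 1
  apply Finset.sum_congr rfl
  intro a _
  rw [eulerH_one]
end
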